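/- For every natural number n ≥ 2, the greatest common divisor of the interior binomial coefficients of the n-th row of Pascal's triangle, gcd{ C(n,a) : 1 ≤ a ≤ n−1 }, equals p if n = p^k for some prime p and some k ≥ 1, and equals 1 if n is not a prime power. -/

import Mathlib

open Nat Finset

private lemma aux_pow_pred_decomp {p k : ℕ} (hp : 2 ≤ p) :
    p ^ (k + 1) - 1 = p * (p ^ k - 1) + (p - 1) := by
  have h1 : p * (p ^ k - 1) = p * p ^ k - p := Nat.mul_sub p (p ^ k) 1 ▸ by ring_nf
  have h2 : p ^ (k + 1) = p * p ^ k := by rw [pow_succ]; ring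
  have h3 : p ≤ p * p ^ k := Nat.le_mul_of_pos_right p (Nat.pow_pos (by omega))
  omega

private lemma aux_not_dvd_choose_pred {p j : ℕ} (hp : p.Prime) (hj : j ≤ p - 1) :
    ¬ p ∣ (p - 1).choose j := by
  intro h
  have hdvd : (p - 1).choose j ∣ (p - 1)! :=
    ⟨j ! * (p - 1 - j)!, ((Nat.choose_mul_factorial_mul_factorial hj).symm).trans
      (mul_assoc _ _ _)⟩
  have hpf : p ∣ (p - 1)! := h.trans hdvd
  have := (Nat.Prime.dvd_factorial hp).1 hpf
  have := hp.two_le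
  omega

private lemma aux_not_dvd_choose_pow_pred {p : ℕ} (hp : p.Prime) :
    ∀ k r : ℕ, r ≤ p ^ k - 1 → ¬ p ∣ (p ^ k - 1).choose r := by
  haveI := Fact.mk hp
  have hp2 := hp.two_le
  intro k
  induction k with
  | zero =>
    intro r hr
    rw [pow_zero] at hr
    have : r = 0 := by omega
    subst this
    simpa using hp.one_lt.ne'
  | succ k ih =>
    intro r hr hdvd
    have hpk : 1 ≤ p ^ k := Nat.one_le_pow _ _ (by omega)
    have key := aux_pow_pred_decomp (k := k) hp2
    have hmod : (p ^ (k + 1) - 1) % p = p - 1 := by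
      rw [key, Nat.mul_add_mod, Nat.mod_eq_of_lt (by omega)]
    have hdivp : (p ^ (k + 1) - 1) / p = p ^ k - 1 := by
      rw [key, Nat.mul_add_div (by omega), Nat.div_eq_of_lt (by omega), add_zero]
    have lucas := Choose.choose_modEq_choose_mod_mul_choose_div_nat
      (n := p ^ (k + 1) - 1) (k := r) (p := p)
    rw [hmod, hdivp] at lucas
    have hprod : p ∣ (p - 1).choose (r % p) * (p ^ k - 1).choose (r / p) := by
      have h0 : (p ^ (k + 1) - 1).choose r ≡ 0 [MOD p] :=
        (Nat.modEq_zero_iff_dvd).2 hdvd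
      exact (Nat.modEq_zero_iff_dvd).1 (lucas.symm.trans h0)
    rcases (Nat.Prime.dvd_mul hp).1 hprod with h | h
    · exact aux_not_dvd_choose_pred hp (by have := Nat.mod_lt r (show 0 < p by omega); omega) h
    · refine ih (r / p) ?_ h
      calc r / p ≤ (p ^ (k + 1) - 1) / p := Nat.div_le_div_right hr
        _ = p ^ k - 1 := hdivp

private lemma aux_lucas_pow {p : ℕ} (hp : p.Prime) :
    ∀ e m : ℕ, (p ^ e * m).choose (p ^ e) ≡ m [MOD p] := by
  haveI := Fact.mk hp
  intro e
  induction e with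
  | zero => intro m; rw [pow_zero, one_mul, Nat.choose_one_right]
  | succ e ih =>
    intro m
    have hp0 : 0 < p := hp.pos
    have lucas := Choose.choose_modEq_choose_mod_mul_choose_div_nat
      (n := p ^ (e + 1) * m) (k := p ^ (e + 1)) (p := p)
    have h1 : p ^ (e + 1) * m = p * (p ^ e * m) := by ring
    have h2 : p ^ (e + 1) = p * p ^ e := by rw [pow_succ]; ring
    have hnmod : (p ^ (e + 1) * m) % p = 0 := by rw [h1, Nat.mul_mod_right]
    have hkmod : (p ^ (e + 1)) % p = 0 := by rw [h2, Nat.mul_mod_right]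
    have hndiv : (p ^ (e + 1) * m) / p = p ^ e * m := by
      rw [h1, Nat.mul_div_cancel_left _ hp0]
    have hkdiv : (p ^ (e + 1)) / p = p ^ e := by
      rw [h2, Nat.mul_div_cancel_left _ hp0]
    rw [hnmod, hkmod, hndiv, hkdiv, Nat.choose_self, one_mul] at lucas
    exact lucas.trans (ih m)

/-- For `n ≥ 2`, the gcd of the interior binomial coefficients
`C(n,a)`, `1 ≤ a ≤ n-1`, equals `p` if `n = p^k` is a prime power (`k ≥ 1`), and equals
`1` if `n` is not a prime power.  (Computational content of Theorem 9.1(ii) of the paper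
for even ambient dimension.) -/
theorem gcd_interior_binomials (n : ℕ) (hn : 2 ≤ n) :
    (∀ p k : ℕ, p.Prime → 1 ≤ k → n = p ^ k →
      (Finset.Icc 1 (n - 1)).gcd (fun a => n.choose a) = p) ∧
    ((¬ ∃ p k : ℕ, p.Prime ∧ 1 ≤ k ∧ n = p ^ k) →
      (Finset.Icc 1 (n - 1)).gcd (fun a => n.choose a) = 1) := by
  constructor
  · rintro p k hp hk rfl
    have hp2 := hp.two_le
    have hn2 : 2 ≤ p ^ k := hn
    -- p divides every interior binomial coefficient
    have hpg : p ∣ (Finset.Icc 1 (p ^ k - 1)).gcd (fun a => (p ^ k).choose a) := by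
      refine Finset.dvd_gcd fun a ha => ?_
      rw [Finset.mem_Icc] at ha
      exact hp.dvd_choose_pow (by omega) (by omega)
    -- the gcd divides C(p^k, 1) = p^k
    have h1mem : 1 ∈ Finset.Icc 1 (p ^ k - 1) := Finset.mem_Icc.2 (by omega)
    have hgn : (Finset.Icc 1 (p ^ k - 1)).gcd (fun a => (p ^ k).choose a) ∣ p ^ k := by
      have := Finset.gcd_dvd h1mem (f := fun a => (p ^ k).choose a)
      simpa [Nat.choose_one_right] using this
    -- the interesting element: a = p^(k-1)
    have hlt : p ^ (k - 1) < p ^ k := Nat.pow_lt_pow_right hp.one_lt (by omega)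
    have hpk1 : 1 ≤ p ^ (k - 1) := Nat.one_le_pow _ _ hp.pos
    have hmem : p ^ (k - 1) ∈ Finset.Icc 1 (p ^ k - 1) := Finset.mem_Icc.2 (by omega)
    have hgC : (Finset.Icc 1 (p ^ k - 1)).gcd (fun a => (p ^ k).choose a) ∣
        (p ^ k).choose (p ^ (k - 1)) := Finset.gcd_dvd hmem
    -- C(p^k, p^(k-1)) = p * C(p^k - 1, p^(k-1) - 1)
    have hid : (p ^ k).choose (p ^ (k - 1)) =
        p * (p ^ k - 1).choose (p ^ (k - 1) - 1) := by
      have hs := Nat.add_one_mul_choose_eq (p ^ k - 1) (p ^ (k - 1) - 1)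
      have e1 : p ^ k - 1 + 1 = p ^ k := by omega
      have e2 : p ^ (k - 1) - 1 + 1 = p ^ (k - 1) := by omega
      rw [e1, e2] at hs
      -- hs : p ^ k * choose (p^k-1) (p^(k-1)-1) = choose (p^k) (p^(k-1)) * p^(k-1)
      have e3 : p ^ k = p * p ^ (k - 1) := by
        rw [← pow_succ']
        congr 1
        omega
      refine Nat.eq_of_mul_eq_mul_right (show 0 < p ^ (k - 1) by omega) ?_
      calc (p ^ k).choose (p ^ (k - 1)) * p ^ (k - 1)
          = p ^ k * (p ^ k - 1).choose (p ^ (k - 1) - 1) := hs.symm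
        _ = p * (p ^ k - 1).choose (p ^ (k - 1) - 1) * p ^ (k - 1) := by
            rw [e3]; ring
    have hC' : ¬ p ∣ (p ^ k - 1).choose (p ^ (k - 1) - 1) :=
      aux_not_dvd_choose_pow_pred hp k (p ^ (k - 1) - 1) (by omega)
    -- conclude
    obtain ⟨j, hjk, hj⟩ := (Nat.dvd_prime_pow hp).1 hgn
    rw [hj] at hpg hgC ⊢
    match j with
    | 0 => simp at hpg; omega
    | 1 => rw [pow_one]
    | (j + 2) =>
      exfalso
      have hpp : p * p ∣ p * (p ^ k - 1).choose (p ^ (k - 1) - 1) := by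
        refine dvd_trans ?_ (hid ▸ hgC)
        have : p * p ∣ p ^ (j + 2) := by
          rw [pow_succ, pow_succ]
          exact Dvd.intro (p ^ j) (by ring)
        exact this
      exact hC' ((Nat.mul_dvd_mul_iff_left hp.pos).1 hpp)
  · intro hnpp
    by_contra hg
    obtain ⟨q, hq, hqg⟩ := Nat.exists_prime_and_dvd hg
    have h1mem : 1 ∈ Finset.Icc 1 (n - 1) := Finset.mem_Icc.2 (by omega)
    have hgn : (Finset.Icc 1 (n - 1)).gcd (fun a => n.choose a) ∣ n := by
      have := Finset.gcd_dvd h1mem (f := fun a => n.choose a)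
      simpa [Nat.choose_one_right] using this
    have hqn : q ∣ n := hqg.trans hgn
    set e := n.factorization q with he_def
    set m := n / q ^ e with hm_def
    have hsplit : q ^ e * m = n := Nat.ordProj_mul_ordCompl_eq_self n q
    have hqm : ¬ q ∣ m := Nat.not_dvd_ordCompl hq (by omega)
    have he : 1 ≤ e := hq.factorization_pos_of_dvd (by omega) hqn
    have hm0 : m ≠ 0 := by intro h; rw [h, mul_zero] at hsplit; omega
    have hm1 : m ≠ 1 := by
      intro h
      exact hnpp ⟨q, e, hq, he, by rw [← hsplit, h, mul_one]⟩
    have hm2 : 2 ≤ m := (Nat.two_le_iff m).2 ⟨hm0, hm1⟩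
    have hqe1 : 1 ≤ q ^ e := Nat.one_le_pow _ _ hq.pos
    have hqen : q ^ e * 2 ≤ n := by
      calc q ^ e * 2 ≤ q ^ e * m := Nat.mul_le_mul_left _ hm2
        _ = n := hsplit
    have hltn : q ^ e < n := by
      rw [← hsplit]
      exact (lt_mul_iff_one_lt_right (by omega)).2 (by omega)
    have hmem : q ^ e ∈ Finset.Icc 1 (n - 1) :=
      Finset.mem_Icc.2 ⟨hqe1, Nat.le_sub_one_of_lt hltn⟩
    have hqC : q ∣ n.choose (q ^ e) := hqg.trans (Finset.gcd_dvd hmem)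
    have hmodeq : n.choose (q ^ e) ≡ m [MOD q] := by
      have := aux_lucas_pow hq e m
      rwa [hsplit] at this
    have : q ∣ m :=
      (Nat.modEq_zero_iff_dvd).1 (hmodeq.symm.trans ((Nat.modEq_zero_iff_dvd).2 hqC))
    exact hqm this
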